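/- arXiv:0803.4210 — 2 statements merged into one kernel-verified Lean document; each statement's English description precedes it below -/
import Mathlib

section
/- Let k be a field, n a positive natural number, and R = k[[X_0,…,X_{n−1}]] the ring of formal power series in n variables over k. Let a, b : Fin n → ℕ and let P be a prime ideal of R. Then the extension of the ideal (X^a, X^b) to the localization R_P fails to be principal if and only if there exist indices i and j with a_i > b_i, b_j > a_j, X_i ∈ P and X_j ∈ P. -/
open MvPowerSeries Finset

private lemma pair_principal_dvd {L : Type*} [CommRing L] [IsDomain L] [IsLocalRing L]
    {x y : L} (hx : x ≠ 0) (h : (Ideal.span {x, y}).IsPrincipal) : x ∣ y ∨ y ∣ x := by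
  obtain ⟨w, hw⟩ := h
  have hxw := hw ▸ (Ideal.subset_span (Set.mem_insert x {y}))
  have hyw := hw ▸ (Ideal.subset_span (Set.mem_insert_of_mem x rfl) : y ∈ Ideal.span {x, y})
  obtain ⟨p, hp⟩ := Ideal.mem_span_singleton'.mp hxw
  obtain ⟨q, hq⟩ := Ideal.mem_span_singleton'.mp hyw
  have hwmem : w ∈ Ideal.span {x, y} := by rw [hw]; exact Ideal.subset_span rfl
  obtain ⟨r, s, hrs⟩ := Ideal.mem_span_pair.mp hwmem
  have hw0 : w ≠ 0 := by rintro rfl; simp at hp; exact hx hp.symm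
  have h1 : (r * p + s * q) * w = 1 * w := by
    rw [one_mul, add_mul, mul_assoc, mul_assoc, hp, hq, hrs]
  have h2 : r * p + s * q = 1 := mul_right_cancel₀ hw0 h1
  rcases IsLocalRing.isUnit_or_isUnit_of_isUnit_add (h2 ▸ isUnit_one) with hu | hu
  · left
    have hpu : IsUnit p := isUnit_of_mul_isUnit_right hu
    exact ⟨q * ↑hpu.unit⁻¹, by rw [← hq, ← hp]; linear_combination (-(q * w)) * hpu.mul_val_inv⟩
  · right
    have hqu : IsUnit q := isUnit_of_mul_isUnit_right hu
    exact ⟨p * ↑hqu.unit⁻¹, by rw [← hq, ← hp]; linear_combination (-(p * w)) * hqu.mul_val_inv⟩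

private lemma prod_X_pow_eq_monomial' {k : Type*} [Field k] {n : ℕ} (b : Fin n → ℕ) :
    (∏ l, (MvPowerSeries.X l : MvPowerSeries (Fin n) k) ^ b l) =
      MvPowerSeries.monomial (R := k) (Finsupp.equivFunOnFinite.symm b) 1 := by
  have h1 : ∀ l, (MvPowerSeries.X l : MvPowerSeries (Fin n) k) ^ b l =
      MvPowerSeries.monomial (R := k) (Finsupp.single l (b l)) 1 := fun l => X_pow_eq l (b l)
  simp_rw [h1]
  have h2 : ∀ (t : Finset (Fin n)),
      (∏ l ∈ t, MvPowerSeries.monomial (R := k) (Finsupp.single l (b l)) 1) =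
        MvPowerSeries.monomial (R := k) (∑ l ∈ t, Finsupp.single l (b l)) 1 := by
    intro t
    induction t using Finset.cons_induction with
    | empty => simp [monomial_zero_one]
    | cons i t hit ih => rw [prod_cons, sum_cons, ih, monomial_mul_monomial, one_mul]
  rw [h2]
  have h3 : (∑ l, Finsupp.single l (b l)) = Finsupp.equivFunOnFinite.symm b := by
    ext j
    rw [Finsupp.finset_sum_apply]
    simp [Finsupp.single_apply]
  rw [h3]

private lemma X_ne_zero' {k : Type*} [Field k] {n : ℕ} (l : Fin n) :
    (MvPowerSeries.X l : MvPowerSeries (Fin n) k) ≠ 0 := by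
  intro h0
  have := congrArg (MvPowerSeries.coeff (R := k) (Finsupp.single l 1)) h0
  simp [MvPowerSeries.coeff_X] at this

private lemma mono_contra {k : Type*} [Field k] {n : ℕ} {a b : Fin n → ℕ} {i : Fin n}
    (hi : b i < a i) {s f : MvPowerSeries (Fin n) k}
    (hs : ¬ ((MvPowerSeries.X i : MvPowerSeries (Fin n) k) ∣ s))
    (h : (∏ l, (MvPowerSeries.X l : MvPowerSeries (Fin n) k) ^ b l) * s
        = (∏ l, (MvPowerSeries.X l : MvPowerSeries (Fin n) k) ^ a l) * f) : False := by
  have hdvd : (MvPowerSeries.X i : MvPowerSeries (Fin n) k) ^ a i ∣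
      (∏ l, (MvPowerSeries.X l : MvPowerSeries (Fin n) k) ^ b l) * s := by
    rw [h]
    exact dvd_mul_of_dvd_left (Finset.dvd_prod_of_mem _ (Finset.mem_univ i)) f
  rw [MvPowerSeries.X_pow_dvd_iff] at hdvd
  rw [MvPowerSeries.X_dvd_iff] at hs
  push_neg at hs
  obtain ⟨e, hei, hce⟩ := hs
  have hlt : (Finsupp.equivFunOnFinite.symm b + e) i < a i := by
    simp only [Finsupp.add_apply, Finsupp.equivFunOnFinite_symm_apply_apply, hei]
    omega
  have hc := hdvd _ hlt
  rw [prod_X_pow_eq_monomial', MvPowerSeries.coeff_add_monomial_mul, one_mul] at hc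
  exact hce hc

private lemma dvd_of_eq_mul_unit {L : Type*} [CommRing L] {x y t w : L}
    (h : x * t = y * w) (ht : IsUnit t) : y ∣ x :=
  ⟨w * ↑ht.unit⁻¹, by rw [← mul_assoc, ← h, mul_assoc, IsUnit.mul_val_inv, mul_one]⟩

private lemma isUnit_map_prod {k : Type*} [Field k] {n : ℕ}
    (P : Ideal (MvPowerSeries (Fin n) k)) [hP : P.IsPrime] (e : Fin n → ℕ)
    (he : ∀ l, e l ≠ 0 → (MvPowerSeries.X l : MvPowerSeries (Fin n) k) ∉ P) :
    IsUnit ((algebraMap (MvPowerSeries (Fin n) k) (Localization.AtPrime P))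
      (∏ l, (MvPowerSeries.X l : MvPowerSeries (Fin n) k) ^ e l)) := by
  rw [map_prod]
  refine Finset.prod_induction _ IsUnit (fun _ _ => IsUnit.mul) isUnit_one fun l _ => ?_
  rcases Nat.eq_zero_or_pos (e l) with h0 | h0
  · simp [h0]
  · rw [map_pow]
    exact (IsLocalization.map_units (M := P.primeCompl) (Localization.AtPrime P)
      ⟨MvPowerSeries.X l, he l h0.ne'⟩).pow _

private lemma span_pair_eq_of_dvd {L : Type*} [CommRing L] {x y : L} (h : y ∣ x) :
    Ideal.span {x, y} = Ideal.span {y} := by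
  apply le_antisymm
  · rw [Ideal.span_le]
    rintro z (rfl | rfl)
    · exact Ideal.mem_span_singleton.mpr h
    · exact Ideal.subset_span rfl
  · exact Ideal.span_mono (Set.singleton_subset_iff.mpr (Set.mem_insert_of_mem _ rfl))
/-- In `R = k[[X_0, …, X_{n-1}]]` over a field `k`, for a prime ideal `P` of `R`,
the extension of `(X^a, X^b)` to the localization `R_P` fails to be principal if
and only if there exist indices `i`, `j` with `a i > b i`, `b j > a j`,
`X i ∈ P` and `X j ∈ P`. -/
theorem stmt_8 (k : Type*) [Field k] (n : ℕ) (hn : 0 < n) (a b : Fin n → ℕ)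
    (P : Ideal (MvPowerSeries (Fin n) k)) (hP : P.IsPrime) :
    ¬ ((Ideal.span {∏ i, (MvPowerSeries.X i : MvPowerSeries (Fin n) k) ^ a i,
          ∏ i, (MvPowerSeries.X i : MvPowerSeries (Fin n) k) ^ b i}).map
        (algebraMap (MvPowerSeries (Fin n) k) (Localization.AtPrime P))).IsPrincipal ↔
      ∃ i j, b i < a i ∧ a j < b j ∧
        (MvPowerSeries.X i : MvPowerSeries (Fin n) k) ∈ P ∧
        (MvPowerSeries.X j : MvPowerSeries (Fin n) k) ∈ P := by
  haveI := hP
  set R := MvPowerSeries (Fin n) k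
  set L := Localization.AtPrime P
  haveI : IsDomain R := NoZeroDivisors.to_isDomain _
  haveI : IsDomain L := IsLocalization.isDomain_localization P.primeCompl_le_nonZeroDivisors
  have hinj : Function.Injective (algebraMap R L) :=
    IsLocalization.injective L P.primeCompl_le_nonZeroDivisors
  set φ := algebraMap R L with hφ
  set u : R := ∏ l, (MvPowerSeries.X l : R) ^ a l with hu
  set v : R := ∏ l, (MvPowerSeries.X l : R) ^ b l with hv
  have hmap : (Ideal.span {u, v}).map φ = Ideal.span {φ u, φ v} := by
    rw [Ideal.map_span, Set.image_insert_eq, Set.image_singleton]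
  rw [hmap]
  have hu0 : φ u ≠ 0 := fun h0 => by
    have : u ≠ 0 := Finset.prod_ne_zero_iff.mpr fun l _ => pow_ne_zero _ (X_ne_zero' l)
    exact this (hinj (by rwa [map_zero]))
  constructor
  · intro hnp
    by_contra hne
    push_neg at hne
    apply hnp
    -- key identity
    have hkey : u * (∏ l, (MvPowerSeries.X l : R) ^ (b l - min (a l) (b l)))
        = v * (∏ l, (MvPowerSeries.X l : R) ^ (a l - min (a l) (b l))) := by
      rw [hu, hv, ← Finset.prod_mul_distrib, ← Finset.prod_mul_distrib]
      refine Finset.prod_congr rfl fun l _ => ?_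
      rw [← pow_add, ← pow_add]
      congr 1
      omega
    have hkeyL : φ u * φ (∏ l, (MvPowerSeries.X l : R) ^ (b l - min (a l) (b l)))
        = φ v * φ (∏ l, (MvPowerSeries.X l : R) ^ (a l - min (a l) (b l))) := by
      rw [← map_mul, ← map_mul, hkey]
    by_cases hA : ∃ i, b i < a i ∧ (MvPowerSeries.X i : R) ∈ P
    · obtain ⟨i0, hi0, hXi0⟩ := hA
      have hB : ∀ j, (b j - min (a j) (b j)) ≠ 0 → (MvPowerSeries.X j : R) ∉ P :=
        fun j hj => hne i0 j hi0 (by omega) hXi0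
      have hvu : φ v ∣ φ u :=
        dvd_of_eq_mul_unit hkeyL (isUnit_map_prod P _ hB)
      rw [span_pair_eq_of_dvd hvu]
      exact ⟨φ v, rfl⟩
    · push_neg at hA
      have hB : ∀ i, (a i - min (a i) (b i)) ≠ 0 → (MvPowerSeries.X i : R) ∉ P :=
        fun i hi => hA i (by omega)
      have huv : φ u ∣ φ v :=
        dvd_of_eq_mul_unit hkeyL.symm (isUnit_map_prod P _ hB)
      rw [Set.pair_comm, span_pair_eq_of_dvd huv]
      exact ⟨φ u, rfl⟩
  · rintro ⟨i, j, hi, hj, hXi, hXj⟩ hpr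
    rcases pair_principal_dvd hu0 hpr with hd | hd
    · -- φ u ∣ φ v : contradiction via i
      obtain ⟨z, hz⟩ := hd
      obtain ⟨⟨f, s⟩, hfs⟩ := IsLocalization.mk'_surjective P.primeCompl z
      have heq : φ (v * s) = φ (u * f) := by
        rw [map_mul, map_mul, hz, mul_assoc, ← hfs, IsLocalization.mk'_spec]
      have heqR : v * s = u * f := hinj heq
      have hsnd : ¬ ((MvPowerSeries.X i : R) ∣ (s : R)) := fun ⟨t, ht⟩ =>
        s.2 (ht ▸ Ideal.mul_mem_right t P hXi)
      exact mono_contra hi hsnd heqR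
    · -- φ v ∣ φ u : contradiction via j
      obtain ⟨z, hz⟩ := hd
      obtain ⟨⟨f, s⟩, hfs⟩ := IsLocalization.mk'_surjective P.primeCompl z
      have heq : φ (u * s) = φ (v * f) := by
        rw [map_mul, map_mul, hz, mul_assoc, ← hfs, IsLocalization.mk'_spec]
      have heqR : u * s = v * f := hinj heq
      have hsnd : ¬ ((MvPowerSeries.X j : R) ∣ (s : R)) := fun ⟨t, ht⟩ =>
        s.2 (ht ▸ Ideal.mul_mem_right t P hXj)
      exact mono_contra hj hsnd heqR
end

section
/- Let k be a field, n a positive natural number, and R = k[[X_0,…,X_{n−1}]] the ring of formal power series in n variables over k. Let m be an index, and let a, b : Fin n → ℕ satisfy b ≤ a componentwise and a_m = b_m = 0. Set u = X^a and v = X^b·X_m. Then for every prime ideal P of R, the extension of the ideal (u, v) to the localization R_P fails to be principal if and only if X_m ∈ P and there exists an index i with b_i < a_i and X_i ∈ P. -/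
open MvPowerSeries

private lemma span_mul_pair_aux {S : Type*} [CommRing S] (c y z : S) :
    Ideal.span {c * y, c * z} = Ideal.span {c} * Ideal.span {y, z} := by
  rw [show ({c * y, c * z} : Set S) = insert (c * y) {c * z} from rfl, Ideal.span_insert,
    show ({y, z} : Set S) = insert y {z} from rfl, Ideal.span_insert, Ideal.mul_sup,
    Ideal.span_singleton_mul_span_singleton, Ideal.span_singleton_mul_span_singleton]

private lemma principal_mul_iff_aux {S : Type*} [CommRing S] [IsDomain S] {c : S} (hc : c ≠ 0)
    (I : Ideal S) : (Ideal.span {c} * I).IsPrincipal ↔ I.IsPrincipal := by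
  constructor
  · rintro ⟨d, hd⟩
    rw [show Submodule.span S ({d} : Set S) = Ideal.span {d} from rfl] at hd
    have hdm : d ∈ Ideal.span {c} * I := by rw [hd]; exact Ideal.mem_span_singleton_self d
    obtain ⟨e, heI, hce⟩ := Ideal.mem_span_singleton_mul.mp hdm
    refine ⟨e, ?_⟩
    show I = Ideal.span {e}
    refine le_antisymm (fun x hx => ?_) ?_
    · have hcx : c * x ∈ Ideal.span {d} := by
        rw [← hd]; exact Ideal.mem_span_singleton_mul.mpr ⟨x, hx, rfl⟩
      obtain ⟨r, hr⟩ := Ideal.mem_span_singleton.mp hcx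
      rw [Ideal.mem_span_singleton]
      exact ⟨r, mul_left_cancel₀ hc (by rw [hr, ← hce]; ring)⟩
    · rw [show Ideal.span ({e} : Set S) = Submodule.span S {e} from rfl,
        Submodule.span_singleton_le_iff_mem]
      exact heI
  · rintro ⟨e, he⟩
    rw [show Submodule.span S ({e} : Set S) = Ideal.span {e} from rfl] at he
    refine ⟨c * e, ?_⟩
    show Ideal.span {c} * I = Ideal.span {c * e}
    rw [he, Ideal.span_singleton_mul_span_singleton]

private lemma prodX_aux {k : Type*} [Field k] {n : ℕ} (c : Fin n → ℕ) (s : Finset (Fin n)) :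
    ∏ i ∈ s, (MvPowerSeries.X i : MvPowerSeries (Fin n) k) ^ c i
      = MvPowerSeries.monomial (R := k) (∑ i ∈ s, Finsupp.single i (c i)) 1 := by
  classical
  induction s using Finset.induction with
  | empty => simp [MvPowerSeries.monomial_zero_one]
  | insert _ _ hns ih =>
    rw [Finset.prod_insert hns, Finset.sum_insert hns, ih, MvPowerSeries.X_pow_eq,
      MvPowerSeries.monomial_mul_monomial, one_mul]

private lemma dvd_of_X_dvd_monomial_mul_aux {k : Type*} [Field k] {n : ℕ} {j : Fin n}
    (e : Fin n →₀ ℕ) (hej : e j = 0) {p : MvPowerSeries (Fin n) k}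
    (h : MvPowerSeries.X j ∣ MvPowerSeries.monomial (R := k) e 1 * p) :
    MvPowerSeries.X j ∣ p := by
  rw [MvPowerSeries.X_dvd_iff] at h ⊢
  intro d hd
  have h2 := h (e + d) (by simp [Finsupp.add_apply, hej, hd])
  rwa [MvPowerSeries.coeff_monomial_mul, if_pos le_self_add, add_tsub_cancel_left, one_mul] at h2

/-- In `R = k[[X_0, …, X_{n-1}]]` over a field `k`, let `b ≤ a` componentwise with
`a m = b m = 0`, and set `u = X^a`, `v = X^b · X_m`. Then for every prime ideal `P`
of `R`, the extension of `(u, v)` to `R_P` fails to be principal if and only if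
`X_m ∈ P` and there exists `i` with `b i < a i` and `X i ∈ P`. -/
theorem stmt_9 (k : Type*) [Field k] (n : ℕ) (hn : 0 < n) (m : Fin n)
    (a b : Fin n → ℕ) (hba : ∀ i, b i ≤ a i) (ham : a m = 0) (hbm : b m = 0)
    (P : Ideal (MvPowerSeries (Fin n) k)) (hP : P.IsPrime) :
    ¬ ((Ideal.span {∏ i, (MvPowerSeries.X i : MvPowerSeries (Fin n) k) ^ a i,
          (∏ i, (MvPowerSeries.X i : MvPowerSeries (Fin n) k) ^ b i) *
            MvPowerSeries.X m}).map
        (algebraMap (MvPowerSeries (Fin n) k) (Localization.AtPrime P))).IsPrincipal ↔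
      ((MvPowerSeries.X m : MvPowerSeries (Fin n) k) ∈ P ∧
        ∃ i, b i < a i ∧ (MvPowerSeries.X i : MvPowerSeries (Fin n) k) ∈ P) := by
  classical
  haveI := hP
  haveI : IsDomain (MvPowerSeries (Fin n) k) := NoZeroDivisors.to_isDomain _
  haveI : IsDomain (Localization.AtPrime P) := IsLocalization.isDomain_of_local_atPrime hP
  set R := MvPowerSeries (Fin n) k
  set S := Localization.AtPrime P
  set φ := algebraMap R S with hφdef
  have hinj : Function.Injective φ :=
    IsLocalization.injective S P.primeCompl_le_nonZeroDivisors
  set B : R := ∏ i, MvPowerSeries.X i ^ b i with hB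
  set w : R := ∏ i, MvPowerSeries.X i ^ (a i - b i) with hw
  -- factorization of X^a
  have hu : ∏ i, (MvPowerSeries.X i : R) ^ a i = B * w := by
    rw [hB, hw, ← Finset.prod_mul_distrib]
    exact Finset.prod_congr rfl fun i _ => by
      rw [← pow_add, Nat.add_sub_cancel' (hba i)]
  -- monomial forms
  have hwmon : w = MvPowerSeries.monomial (R := k) (∑ i, Finsupp.single i (a i - b i)) 1 :=
    prodX_aux _ _
  have hBmon : B = MvPowerSeries.monomial (R := k) (∑ i, Finsupp.single i (b i)) 1 :=
    prodX_aux _ _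
  have hBne : B ≠ 0 := by
    intro h0
    have := congrArg (MvPowerSeries.coeff (R := k) (∑ i, Finsupp.single i (b i))) (hBmon ▸ h0)
    rw [MvPowerSeries.coeff_monomial_same, map_zero] at this
    exact one_ne_zero this
  have hφBne : φ B ≠ 0 := fun h0 => hBne (hinj (by rw [h0, map_zero]))
  have hXne : ∀ j : Fin n, (MvPowerSeries.X j : R) ≠ 0 := by
    intro j h0
    rw [MvPowerSeries.X_def] at h0
    have := congrArg (MvPowerSeries.coeff (R := k) (Finsupp.single j 1)) h0
    rw [MvPowerSeries.coeff_monomial_same, map_zero] at this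
    exact one_ne_zero this
  -- the mapped ideal
  have hmap : (Ideal.span {∏ i, (MvPowerSeries.X i : R) ^ a i, B * MvPowerSeries.X m}).map φ
      = Ideal.span {φ B} * Ideal.span {φ w, φ (MvPowerSeries.X m)} := by
    rw [Ideal.map_span, Set.image_insert_eq, Set.image_singleton, hu, map_mul, map_mul,
      span_mul_pair_aux]
  rw [hmap, principal_mul_iff_aux hφBne]
  -- characterize w ∈ P
  have hwP : w ∈ P ↔ ∃ i, b i < a i ∧ (MvPowerSeries.X i : R) ∈ P := by
    rw [hw, Ideal.IsPrime.prod_mem_iff]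
    constructor
    · rintro ⟨i, -, hi⟩
      rcases Nat.eq_zero_or_pos (a i - b i) with h0 | hpos
      · rw [h0, pow_zero] at hi
        exact absurd (P.eq_top_iff_one.mpr hi) hP.ne_top
      · exact ⟨i, Nat.lt_of_sub_pos hpos, hP.mem_of_pow_mem _ hi⟩
    · rintro ⟨i, hilt, hiP⟩
      exact ⟨i, Finset.mem_univ i,
        Ideal.pow_mem_of_mem P hiP _ (Nat.sub_pos_of_lt hilt)⟩
  by_cases hm : (MvPowerSeries.X m : R) ∈ P
  · by_cases hex : ∃ i, b i < a i ∧ (MvPowerSeries.X i : R) ∈ P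
    · -- nonprincipal case
      simp only [hm, hex, and_self, iff_true, true_and]
      rintro ⟨h, hh⟩
      obtain ⟨t, ht⟩ := Ideal.mem_span_singleton.mp
        (hh ▸ Ideal.subset_span (by simp : φ w ∈ ({φ w, φ (MvPowerSeries.X m)} : Set S)))
      obtain ⟨s, hs⟩ := Ideal.mem_span_singleton.mp
        (hh ▸ Ideal.subset_span
          (by simp : φ (MvPowerSeries.X m) ∈ ({φ w, φ (MvPowerSeries.X m)} : Set S)))
      have hmemh : h ∈ Ideal.span {φ w, φ (MvPowerSeries.X m)} := by
        rw [hh]; exact Submodule.mem_span_singleton_self h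
      obtain ⟨α, β, hαβ⟩ := Ideal.mem_span_pair.mp hmemh
      have hhne : h ≠ 0 := by
        intro h0
        rw [h0, zero_mul] at hs
        exact hXne m (hinj (by rw [hs, map_zero]))
      have hone : α * t + β * s = 1 := by
        apply mul_left_cancel₀ hhne
        rw [mul_one, mul_add]
        calc h * (α * t) + h * (β * s)
            = α * (h * t) + β * (h * s) := by ring
          _ = h := by rw [← ht, ← hs, hαβ]
      rcases IsLocalRing.isUnit_or_isUnit_of_add_one hone with hu1 | hu1
      · -- t is a unit, so φ w ∣ φ (X m)
        have htu : IsUnit t := isUnit_of_mul_isUnit_right hu1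
        have hdvd : φ w ∣ φ (MvPowerSeries.X m) := by
          refine dvd_trans ⟨↑htu.unit⁻¹, ?_⟩ ⟨s, hs⟩
          rw [ht, mul_assoc, IsUnit.mul_val_inv, mul_one]
        obtain ⟨q, hq⟩ := hdvd
        obtain ⟨⟨r, p⟩, hrp⟩ := IsLocalization.surj (M := P.primeCompl) (S := S) q
        have heq : MvPowerSeries.X m * (p : R) = w * r := by
          apply hinj
          rw [map_mul, map_mul, hq, mul_assoc, hrp]
        obtain ⟨i0, hi0lt, hi0P⟩ := hex
        have hi0m : i0 ≠ m := by
          intro h'; subst h'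
          omega
        have hXi0w : (MvPowerSeries.X i0 : R) ∣ w :=
          dvd_trans (dvd_pow_self _ (Nat.sub_ne_zero_of_lt hi0lt))
            (Finset.dvd_prod_of_mem _ (Finset.mem_univ i0))
        have hXi0 : (MvPowerSeries.X i0 : R) ∣ MvPowerSeries.X m * (p : R) :=
          heq ▸ hXi0w.mul_right r
        rw [MvPowerSeries.X_def] at hXi0
        have hdp : (MvPowerSeries.X i0 : R) ∣ (p : R) :=
          dvd_of_X_dvd_monomial_mul_aux _ (by simp [Finsupp.single_apply, hi0m.symm]) hXi0
        obtain ⟨p', hp'⟩ := hdp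
        exact p.2 (hp' ▸ Ideal.mul_mem_right _ _ hi0P)
      · -- s is a unit, so φ (X m) ∣ φ w
        have hsu : IsUnit s := isUnit_of_mul_isUnit_right hu1
        have hdvd : φ (MvPowerSeries.X m) ∣ φ w := by
          refine dvd_trans ⟨↑hsu.unit⁻¹, ?_⟩ ⟨t, ht⟩
          rw [hs, mul_assoc, IsUnit.mul_val_inv, mul_one]
        obtain ⟨q, hq⟩ := hdvd
        obtain ⟨⟨r, p⟩, hrp⟩ := IsLocalization.surj (M := P.primeCompl) (S := S) q
        have heq : w * (p : R) = MvPowerSeries.X m * r := by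
          apply hinj
          rw [map_mul, map_mul, hq, mul_assoc, hrp]
        have hXm : (MvPowerSeries.X m : R) ∣ w * (p : R) := heq ▸ Dvd.intro r rfl
        rw [hwmon] at hXm
        have hdp : (MvPowerSeries.X m : R) ∣ (p : R) := by
          refine dvd_of_X_dvd_monomial_mul_aux _ ?_ hXm
          simp only [Finsupp.finset_sum_apply, Finsupp.single_apply]
          rw [Finset.sum_ite_eq' Finset.univ m (fun i => a i - b i)]
          simp [ham, hbm]
        obtain ⟨p', hp'⟩ := hdp
        exact p.2 (hp' ▸ Ideal.mul_mem_right _ _ hm)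
    · -- w is a unit in the localization
      have hwP' : w ∉ P := fun hwp => hex (hwP.mp hwp)
      have hunit : IsUnit (φ w) :=
        (IsLocalization.AtPrime.isUnit_to_map_iff S P w).mpr hwP'
      have htop : Ideal.span {φ w, φ (MvPowerSeries.X m)} = ⊤ :=
        Ideal.eq_top_of_isUnit_mem _ (Ideal.subset_span (by simp)) hunit
      rw [htop]
      simp only [hm, true_and, hex, iff_false, not_not]
      exact ⟨1, Ideal.span_singleton_one.symm⟩
  · -- X m is a unit in the localization
    have hunit : IsUnit (φ (MvPowerSeries.X m)) :=
      (IsLocalization.AtPrime.isUnit_to_map_iff S P _).mpr hm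
    have htop : Ideal.span {φ w, φ (MvPowerSeries.X m)} = ⊤ :=
      Ideal.eq_top_of_isUnit_mem _ (Ideal.subset_span (by simp)) hunit
    rw [htop]
    simp only [hm, false_and, iff_false, not_not]
    exact ⟨1, Ideal.span_singleton_one.symm⟩
end
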